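/- arXiv:2408.03803 — 3 statements merged into one kernel-verified Lean document; each statement's English description precedes it below -/
import Mathlib

section
/- If X is Poisson with parameter λ and Y is Poisson with parameter λ′ where 0 < λ < λ′ < 1, then d_TV(X,Y) = e^{−λ} − e^{−λ′} ≤ λ′ − λ. -/
open Real

lemma tsum_poisson (mu : ℝ) :
    ∑' k : ℕ, Real.exp (-mu) * mu ^ k / (Nat.factorial k) = 1 := by
  have h : ∀ k : ℕ, Real.exp (-mu) * mu ^ k / (Nat.factorial k)
      = Real.exp (-mu) * (mu ^ k / (Nat.factorial k)) := by
    intro k; ring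
  simp only [h]
  rw [tsum_mul_left]
  have : (∑' k : ℕ, mu ^ k / (Nat.factorial k : ℝ)) = Real.exp mu := by
    rw [Real.exp_eq_exp_ℝ, NormedSpace.exp_eq_tsum_div]
  rw [this, ← Real.exp_add]
  simp

/-- For Poisson variables with parameters `0 < λ < λ' < 1`, the total variation
distance equals `e^{-λ} - e^{-λ'}`, which is at most `λ' - λ`. -/
theorem stmt_3 (lam lam' : ℝ) (h0 : 0 < lam) (h1 : lam < lam') (h2 : lam' < 1) :
    (1 / 2) * (∑' k : ℕ, |Real.exp (-lam) * lam ^ k / (Nat.factorial k)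
        - Real.exp (-lam') * lam' ^ k / (Nat.factorial k)|)
      = Real.exp (-lam) - Real.exp (-lam')
    ∧ Real.exp (-lam) - Real.exp (-lam') ≤ lam' - lam := by
  have h0' : (0:ℝ) < lam' := h0.trans h1
  have hexp : Real.exp (-lam') < Real.exp (-lam) := Real.exp_lt_exp.mpr (by linarith)
  set a : ℕ → ℝ := fun k => Real.exp (-lam) * lam ^ k / (Nat.factorial k) with ha
  set b : ℕ → ℝ := fun k => Real.exp (-lam') * lam' ^ k / (Nat.factorial k) with hb
  have hsa : Summable a := by
    have := (Real.summable_pow_div_factorial lam).mul_left (Real.exp (-lam))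
    simpa [ha, mul_div_assoc] using this
  have hsb : Summable b := by
    have := (Real.summable_pow_div_factorial lam').mul_left (Real.exp (-lam'))
    simpa [hb, mul_div_assoc] using this
  -- key sign fact: for k ≥ 1, a k ≤ b k
  have hk1 : Real.exp (-lam) * lam ≤ Real.exp (-lam') * lam' := by
    have hb1 : (1 : ℝ) + (lam - lam') ≤ Real.exp (lam - lam') := by
      linarith [Real.add_one_le_exp (lam - lam')]
    have key : lam ≤ lam' * (1 + (lam - lam')) := by nlinarith
    have : lam ≤ lam' * Real.exp (lam - lam') := by
      nlinarith [Real.exp_pos (lam - lam')]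
    calc Real.exp (-lam) * lam ≤ Real.exp (-lam) * (lam' * Real.exp (lam - lam')) := by
          nlinarith [Real.exp_pos (-lam)]
      _ = Real.exp (-lam + (lam - lam')) * lam' := by rw [Real.exp_add]; ring
      _ = Real.exp (-lam') * lam' := by ring_nf
  have hab : ∀ k : ℕ, 1 ≤ k → a k ≤ b k := by
    intro k hk
    obtain ⟨m, rfl⟩ := Nat.exists_eq_add_of_le hk
    simp only [ha, hb]
    have hfac : (0:ℝ) < (Nat.factorial (1 + m) : ℝ) := by positivity
    rw [div_le_div_iff_of_pos_right hfac]
    calc Real.exp (-lam) * lam ^ (1 + m) = (Real.exp (-lam) * lam) * lam ^ m := by ring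
      _ ≤ (Real.exp (-lam') * lam') * lam' ^ m := by
          have hpm : lam ^ m ≤ lam' ^ m := pow_le_pow_left₀ h0.le h1.le m
          have : (0:ℝ) < Real.exp (-lam') * lam' := by positivity
          nlinarith [pow_pos h0 m, Real.exp_pos (-lam), Real.exp_pos (-lam')]
      _ = Real.exp (-lam') * lam' ^ (1 + m) := by ring
  set c : ℝ := 2 * (Real.exp (-lam) - Real.exp (-lam')) with hc
  have hsplit : ∀ k : ℕ, |a k - b k| = (b k - a k) + (if k = 0 then c else 0) := by
    intro k
    rcases Nat.eq_zero_or_pos k with rfl | hk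
    · have h00 : (if (0:ℕ) = 0 then c else 0) = c := if_pos rfl
      rw [h00]
      simp only [ha, hb, hc, pow_zero, Nat.factorial_zero, Nat.cast_one, mul_one, div_one]
      rw [abs_of_pos (by linarith)]
      ring
    · rw [if_neg (by omega), add_zero, abs_of_nonpos (by linarith [hab k hk])]
      ring
  have hsg : Summable (fun k => b k - a k) := hsb.sub hsa
  have hsi : Summable (fun k : ℕ => if k = 0 then c else 0) := by
    apply summable_of_ne_finset_zero (s := {0})
    intro k hk
    simp [Finset.mem_singleton] at hk
    simp [hk]
  have htsum : (∑' k : ℕ, |a k - b k|) = c := by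
    calc (∑' k : ℕ, |a k - b k|)
        = ∑' k : ℕ, ((b k - a k) + (if k = 0 then c else 0)) := by
          exact tsum_congr hsplit
      _ = (∑' k : ℕ, (b k - a k)) + ∑' k : ℕ, (if k = 0 then c else 0) := by
          exact Summable.tsum_add hsg hsi
      _ = (1 - 1) + c := by
          rw [Summable.tsum_sub hsb hsa]
          rw [tsum_poisson, tsum_poisson, tsum_ite_eq]
      _ = c := by ring
  constructor
  · rw [htsum, hc]; ring
  · have hb1 : (1 : ℝ) + (lam - lam') ≤ Real.exp (lam - lam') := by
      linarith [Real.add_one_le_exp (lam - lam')]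
    have hel : Real.exp (-lam) ≤ 1 := Real.exp_le_one_iff.mpr (by linarith)
    have : Real.exp (-lam') = Real.exp (-lam) * Real.exp (lam - lam') := by
      rw [← Real.exp_add]; ring_nf
    nlinarith [Real.exp_pos (-lam)]
end

section
/- There is an absolute constant C such that if X is Poisson with parameter λ and Y is Poisson with parameter λ′ with 0 < λ < λ′, then d_TV(X,Y) ≤ C (λ′ − λ)/(1 + √λ). -/
open Real

noncomputable def pp (t : ℝ) (k : ℕ) : ℝ := Real.exp (-t) * t ^ k / (Nat.factorial k)

noncomputable def qq (t : ℝ) : ℕ → ℝ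
  | 0 => 0
  | (k+1) => pp t k

lemma pp_nonneg {t : ℝ} (ht : 0 ≤ t) (k : ℕ) : 0 ≤ pp t k := by
  unfold pp; positivity

lemma pp_le_one {t : ℝ} (ht : 0 ≤ t) (k : ℕ) : pp t k ≤ 1 := by
  unfold pp
  have h := Real.pow_div_factorial_le_exp t ht k
  have : Real.exp (-t) * t ^ k / (Nat.factorial k) = Real.exp (-t) * (t ^ k / Nat.factorial k) := by
    ring
  rw [this]
  calc Real.exp (-t) * (t ^ k / Nat.factorial k) ≤ Real.exp (-t) * Real.exp t :=
        mul_le_mul_of_nonneg_left h (Real.exp_nonneg _)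
    _ = 1 := by rw [← Real.exp_add]; simp

lemma summable_pp (t : ℝ) : Summable (pp t) := by
  have := (Real.summable_pow_div_factorial t).mul_left (Real.exp (-t))
  refine this.congr fun n => ?_
  unfold pp; ring

lemma summable_qq (t : ℝ) : Summable (qq t) := by
  rw [← summable_nat_add_iff 1]
  exact (summable_pp t).congr fun n => rfl

lemma hasDerivAt_pp (t : ℝ) (k : ℕ) :
    HasDerivAt (fun s => pp s k) (qq t k - pp t k) t := by
  have he : HasDerivAt (fun s : ℝ => Real.exp (-s)) (-Real.exp (-t)) t := by
    simpa [Function.comp_def] using (Real.hasDerivAt_exp (-t)).comp t (hasDerivAt_neg t)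
  have hp : HasDerivAt (fun s : ℝ => s ^ k) (k * t ^ (k - 1)) t := hasDerivAt_pow k t
  have h := (he.mul hp).div_const (Nat.factorial k : ℝ)
  refine h.congr_deriv ?_
  match k with
  | 0 => simp [qq, pp]
  | (k+1) =>
    show (-Real.exp (-t) * t ^ (k+1) + Real.exp (-t) * (((k+1:ℕ):ℝ) * t ^ (k+1-1))) / ((k+1).factorial : ℝ)
        = pp t k - pp t (k+1)
    unfold pp
    have hk : ((k).factorial : ℝ) ≠ 0 := by positivity
    rw [Nat.factorial_succ]
    push_cast
    field_simp
    ring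

lemma continuous_pp (k : ℕ) : Continuous (fun t => pp t k) := by
  unfold pp
  continuity

lemma continuous_qq (k : ℕ) : Continuous (fun t => qq t k) := by
  match k with
  | 0 => simpa [qq] using continuous_const
  | (k+1) => exact continuous_pp k

lemma ftc_bound (k : ℕ) {a b : ℝ} (hab : a ≤ b) :
    |pp a k - pp b k| ≤ ∫ t in a..b, |qq t k - pp t k| := by
  have hint : IntervalIntegrable (fun t => qq t k - pp t k) MeasureTheory.volume a b :=
    ((continuous_qq k).sub (continuous_pp k)).intervalIntegrable a b
  have heq : ∫ t in a..b, (qq t k - pp t k) = pp b k - pp a k :=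
    intervalIntegral.integral_eq_sub_of_hasDerivAt (fun t _ => hasDerivAt_pp t k) hint
  rw [abs_sub_comm, ← heq]
  exact intervalIntegral.abs_integral_le_integral_abs hab

lemma pp_succ (t : ℝ) (k : ℕ) : pp t (k+1) = pp t k * (t / (k+1)) := by
  unfold pp
  rw [Nat.factorial_succ]
  push_cast
  have h1 : ((k).factorial : ℝ) ≠ 0 := by positivity
  have h2 : ((k:ℝ) + 1) ≠ 0 := by positivity
  field_simp
  ring

lemma pp_mono_up {t : ℝ} (ht : 0 ≤ t) {k : ℕ} (h : (k:ℝ) + 1 ≤ t) :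
    pp t k ≤ pp t (k+1) := by
  rw [pp_succ]
  nlinarith [pp_nonneg ht k, (le_div_iff₀ (by positivity : (0:ℝ) < (k:ℝ)+1)).2 (by push_cast; linarith : (1:ℝ) * ((k:ℝ)+1) ≤ t)]

lemma pp_mono_down {t : ℝ} (ht : 0 ≤ t) {k : ℕ} (h : t ≤ (k:ℝ) + 1) :
    pp t (k+1) ≤ pp t k := by
  rw [pp_succ]
  have h1 : t / ((k:ℝ)+1) ≤ 1 := (div_le_one (by positivity)).2 (by push_cast; linarith)
  nlinarith [pp_nonneg ht k]

lemma summable_abs_diff (t : ℝ) : Summable (fun k => |qq t k - pp t k|) :=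
  ((summable_qq t).sub (summable_pp t)).abs

lemma tsum_abs_diff_le {t : ℝ} (ht : 0 < t) :
    ∑' k, |qq t k - pp t k| ≤ 2 * pp t (Nat.floor t) := by
  set m := Nat.floor t with hm
  have hms : Summable (fun k => |qq t k - pp t k|) := summable_abs_diff t
  rw [← Summable.sum_add_tsum_nat_add (m+1) hms]
  have hhead : ∑ k ∈ Finset.range (m+1), |qq t k - pp t k| = pp t m := by
    rw [Finset.sum_range_succ']
    have : ∀ i ∈ Finset.range m, |qq t (i+1) - pp t (i+1)| = pp t (i+1) - pp t i := by
      intro i hi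
      rw [Finset.mem_range] at hi
      have hle : (i:ℝ) + 1 ≤ t := by
        have : (i:ℝ) + 1 ≤ m := by exact_mod_cast Nat.succ_le_of_lt hi
        exact this.trans (Nat.floor_le ht.le)
      show |pp t i - pp t (i+1)| = pp t (i+1) - pp t i
      rw [abs_sub_comm, abs_of_nonneg (by linarith [pp_mono_up ht.le hle])]
    rw [Finset.sum_congr rfl this, Finset.sum_range_sub (fun i => pp t i)]
    show pp t m - pp t 0 + |qq t 0 - pp t 0| = pp t m
    have : |qq t 0 - pp t 0| = pp t 0 := by
      show |0 - pp t 0| = pp t 0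
      rw [zero_sub, abs_neg, abs_of_nonneg (pp_nonneg ht.le 0)]
    rw [this]; ring
  have htail : ∑' (i : ℕ), |qq t (i + (m+1)) - pp t (i + (m+1))| ≤ pp t m := by
    apply Real.tsum_le_of_sum_range_le (fun n => abs_nonneg _)
    intro n
    have heq : ∀ i, |qq t (i + (m+1)) - pp t (i + (m+1))| = pp t (i+m) - pp t (i+m+1) := by
      intro i
      have : i + (m+1) = (i + m) + 1 := by ring
      rw [this]
      show |pp t (i+m) - pp t (i+m+1)| = pp t (i+m) - pp t (i+m+1)
      have hge : t ≤ ((i+m:ℕ):ℝ) + 1 := by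
        have h1 : t < m + 1 := Nat.lt_floor_add_one t
        push_cast
        have : (0:ℝ) ≤ i := Nat.cast_nonneg i
        linarith
      exact abs_of_nonneg (by linarith [pp_mono_down ht.le hge])
    calc ∑ i ∈ Finset.range n, |qq t (i + (m+1)) - pp t (i + (m+1))|
        = ∑ i ∈ Finset.range n, (pp t (i+m) - pp t (i+m+1)) := Finset.sum_congr rfl (fun i _ => heq i)
      _ = -(∑ i ∈ Finset.range n, (pp t (i+m+1) - pp t (i+m))) := by rw [← Finset.sum_neg_distrib]; congr 1; ext i; ring
      _ = -(pp t (n+m) - pp t m) := by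
            have := Finset.sum_range_sub (fun i => pp t (i+m)) n
            simp only [show ∀ i, i + m + 1 = i + 1 + m from fun i => by ring] at *
            rw [this]; simp
      _ ≤ pp t m := by linarith [pp_nonneg ht.le (n+m)]
  rw [hhead]
  linarith

lemma stirling_lb (n : ℕ) : Real.sqrt (2*n) * ((n:ℝ) / Real.exp 1)^n ≤ (n.factorial : ℝ) := by
  match n with
  | 0 => simp
  | (n+1) =>
    have hten : Filter.Tendsto (Stirling.stirlingSeq ∘ Nat.succ) Filter.atTop (nhds (Real.sqrt π)) :=
      Stirling.tendsto_stirlingSeq_sqrt_pi.comp (Filter.tendsto_add_atTop_nat 1)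
    have hge : Real.sqrt π ≤ Stirling.stirlingSeq (n+1) :=
      Stirling.stirlingSeq'_antitone.le_of_tendsto hten n
    have h1 : (1:ℝ) ≤ Real.sqrt π := by
      rw [show (1:ℝ) = Real.sqrt 1 by simp]
      exact Real.sqrt_le_sqrt (by linarith [Real.pi_gt_three])
    have hpos : 0 < Real.sqrt (2*((n+1:ℕ):ℝ)) * (((n+1:ℕ):ℝ) / Real.exp 1)^(n+1) := by
      push_cast; positivity
    have hss := h1.trans hge
    unfold Stirling.stirlingSeq at hss
    rw [le_div_iff₀ hpos] at hss
    nlinarith [mul_le_mul_of_nonneg_right h1 hpos.le]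

lemma pp_floor_le {t : ℝ} (ht : 2 ≤ t) : pp t (Nat.floor t) ≤ 1 / Real.sqrt t := by
  set m := Nat.floor t with hm
  have ht0 : (0:ℝ) < t := by linarith
  have hm1 : 1 ≤ m := Nat.le_floor (by exact_mod_cast (by linarith : (1:ℝ) ≤ t))
  have hm0 : (0:ℝ) < m := by exact_mod_cast hm1
  have hmt : (m:ℝ) ≤ t := Nat.floor_le ht0.le
  have htm : t < (m:ℝ) + 1 := Nat.lt_floor_add_one t
  have h2m : t ≤ 2*(m:ℝ) := by linarith
  -- key: exp(-t) * t^m ≤ (m/e)^m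
  have key : Real.exp (-t) * t ^ m ≤ ((m:ℝ) / Real.exp 1) ^ m := by
    have hlog : Real.log (t / m) ≤ t / m - 1 := Real.log_le_sub_one_of_pos (by positivity)
    have hlog2 : (m:ℝ) * Real.log (t/m) ≤ t - m := by
      have := mul_le_mul_of_nonneg_left hlog hm0.le
      calc (m:ℝ) * Real.log (t/m) ≤ (m:ℝ) * (t/m - 1) := this
        _ = t - m := by field_simp
    have ht' : t ^ m = Real.exp ((m:ℝ) * Real.log t) := by
      rw [← Real.exp_log ht0, ← Real.exp_nat_mul, Real.log_exp]
    have hm' : ((m:ℝ)/Real.exp 1) ^ m = Real.exp ((m:ℝ) * Real.log m - m) := by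
      have e1 : ((m:ℝ))^m = Real.exp ((m:ℝ) * Real.log m) := by
        rw [← Real.rpow_natCast (m:ℝ) m, Real.rpow_def_of_pos hm0, mul_comm]
      have e2 : (Real.exp 1)^m = Real.exp (m:ℝ) := by
        rw [← Real.exp_nat_mul, mul_one]
      rw [div_pow, e1, e2, ← Real.exp_sub]
    rw [ht', hm', ← Real.exp_add]
    apply Real.exp_le_exp.2
    rw [Real.log_div (ne_of_gt ht0) (ne_of_gt hm0)] at hlog2
    nlinarith
  have hfac := stirling_lb m
  have hd0 : (0:ℝ) < Real.sqrt (2*(m:ℝ)) * ((m:ℝ) / Real.exp 1)^m := by positivity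
  calc pp t m ≤ (((m:ℝ) / Real.exp 1)^m) / (Real.sqrt (2*(m:ℝ)) * ((m:ℝ) / Real.exp 1)^m) := by
        unfold pp
        exact div_le_div₀ (by positivity) key hd0 hfac
    _ = 1 / Real.sqrt (2*(m:ℝ)) := by
        have : ((m:ℝ) / Real.exp 1)^m ≠ 0 := by positivity
        field_simp
    _ ≤ 1 / Real.sqrt t := by
        apply one_div_le_one_div_of_le (Real.sqrt_pos.2 ht0)
        exact Real.sqrt_le_sqrt h2m

lemma mode_bound {lam t : ℝ} (hl : 0 < lam) (ht : lam ≤ t) :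
    2 * pp t (Nat.floor t) ≤ 6 / (1 + Real.sqrt lam) := by
  have hsl : 0 ≤ Real.sqrt lam := Real.sqrt_nonneg _
  have h1s : 0 < 1 + Real.sqrt lam := by linarith
  rcases le_or_gt 2 lam with h2 | h2
  · have ht2 : 2 ≤ t := h2.trans ht
    have hb := pp_floor_le ht2
    have hst : 0 < Real.sqrt t := Real.sqrt_pos.2 (by linarith)
    have h1t : 1 ≤ Real.sqrt t := by
      rw [show (1:ℝ) = Real.sqrt 1 by simp]
      exact Real.sqrt_le_sqrt (by linarith)
    have hsls : Real.sqrt lam ≤ Real.sqrt t := Real.sqrt_le_sqrt ht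
    calc 2 * pp t (Nat.floor t) ≤ 2 * (1 / Real.sqrt t) := by linarith
      _ = 2 / Real.sqrt t := by ring
      _ ≤ 6 / (1 + Real.sqrt lam) := by
          rw [div_le_div_iff₀ hst h1s]
          nlinarith
  · have ht0 : (0:ℝ) ≤ t := by linarith
    have hb := pp_le_one ht0 (Nat.floor t)
    have hs2 : Real.sqrt lam ≤ 2 := by
      have h := Real.sqrt_le_sqrt (le_of_lt h2)
      have : Real.sqrt 2 ≤ 2 := by
        nlinarith [Real.sq_sqrt (by norm_num : (0:ℝ) ≤ 2), Real.sqrt_nonneg 2]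
      linarith
    calc 2 * pp t (Nat.floor t) ≤ 2 := by linarith
      _ ≤ 6 / (1 + Real.sqrt lam) := by
          rw [le_div_iff₀ h1s]; nlinarith

lemma main_bound {lam lam' : ℝ} (hl : 0 < lam) (hll : lam < lam') :
    ∑' k : ℕ, |pp lam k - pp lam' k| ≤ 6 * (lam' - lam) / (1 + Real.sqrt lam) := by
  have hab : lam ≤ lam' := hll.le
  have h1s : (0:ℝ) < 1 + Real.sqrt lam := by positivity
  apply Real.tsum_le_of_sum_range_le (fun n => abs_nonneg _)
  intro N
  have step1 : ∀ k, |pp lam k - pp lam' k| ≤ ∫ t in lam..lam', |qq t k - pp t k| :=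
    fun k => ftc_bound k hab
  have step2 : ∑ k ∈ Finset.range N, |pp lam k - pp lam' k|
      ≤ ∑ k ∈ Finset.range N, ∫ t in lam..lam', |qq t k - pp t k| :=
    Finset.sum_le_sum (fun k _ => step1 k)
  have step3 : ∑ k ∈ Finset.range N, (∫ t in lam..lam', |qq t k - pp t k|)
      = ∫ t in lam..lam', ∑ k ∈ Finset.range N, |qq t k - pp t k| := by
    rw [intervalIntegral.integral_finset_sum]
    intro k _
    exact (((continuous_qq k).sub (continuous_pp k)).abs).intervalIntegrable lam lam'
  have step4 : (∫ t in lam..lam', ∑ k ∈ Finset.range N, |qq t k - pp t k|)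
      ≤ ∫ t in lam..lam', (6 / (1 + Real.sqrt lam)) := by
    apply intervalIntegral.integral_mono_on hab
    · exact (continuous_finset_sum _ (fun k _ => ((continuous_qq k).sub (continuous_pp k)).abs)).intervalIntegrable lam lam'
    · exact intervalIntegrable_const
    · intro t htm
      have ht0 : 0 < t := lt_of_lt_of_le hl htm.1
      calc ∑ k ∈ Finset.range N, |qq t k - pp t k|
          ≤ ∑' k, |qq t k - pp t k| :=
            Summable.sum_le_tsum _ (fun k _ => abs_nonneg _) (summable_abs_diff t)
        _ ≤ 2 * pp t (Nat.floor t) := tsum_abs_diff_le ht0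
        _ ≤ 6 / (1 + Real.sqrt lam) := mode_bound hl htm.1
  have step5 : (∫ _t in lam..lam', (6 / (1 + Real.sqrt lam))) = 6 * (lam' - lam) / (1 + Real.sqrt lam) := by
    rw [intervalIntegral.integral_const]
    rw [smul_eq_mul]
    ring
  calc ∑ k ∈ Finset.range N, |pp lam k - pp lam' k|
      ≤ ∫ t in lam..lam', ∑ k ∈ Finset.range N, |qq t k - pp t k| := by rw [← step3]; exact step2
    _ ≤ 6 * (lam' - lam) / (1 + Real.sqrt lam) := by rw [← step5]; exact step4

/-- There is an absolute constant `C` such that for Poisson parameters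
`0 < λ < λ'`, the total variation distance between `Poisson(λ)` and
`Poisson(λ')` is at most `C (λ' - λ)/(1 + √λ)`. -/
theorem stmt_5 :
    ∃ C : ℝ, 0 < C ∧ ∀ lam lam' : ℝ, 0 < lam → lam < lam' →
      (1 / 2) * (∑' k : ℕ, |Real.exp (-lam) * lam ^ k / (Nat.factorial k)
          - Real.exp (-lam') * lam' ^ k / (Nat.factorial k)|)
        ≤ C * (lam' - lam) / (1 + Real.sqrt lam) := by
  refine ⟨3, by norm_num, fun lam lam' hl hll => ?_⟩
  have key := main_bound hl hll
  have heq : ∑' k : ℕ, |Real.exp (-lam) * lam ^ k / (Nat.factorial k)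
          - Real.exp (-lam') * lam' ^ k / (Nat.factorial k)|
      = ∑' k : ℕ, |pp lam k - pp lam' k| := rfl
  rw [heq]
  have h1s : (0:ℝ) < 1 + Real.sqrt lam := by positivity
  calc (1/2) * ∑' k : ℕ, |pp lam k - pp lam' k|
      ≤ (1/2) * (6 * (lam' - lam) / (1 + Real.sqrt lam)) := by linarith
    _ = 3 * (lam' - lam) / (1 + Real.sqrt lam) := by ring
end

section
/- Let T be a finite set of odd primes and W_q (q ∈ T) independent with P(W_q = 0) = 1 − 1/(q−1), P(W_q = v) = 1/q^v for v ≥ 1. Let R_T = #{q ∈ T : W_q ≥ 1} and let Z be a Poisson random variable with parameter H_1(T) = Σ_{q∈T} 1/(q−1). Then d_TV(R_T, Z) ≪ H_2(T)/(1 + H_1(T)) with absolute implied constant, where H_2(T) = Σ_{q∈T} 1/q². -/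
open Finset

namespace Stmt15

/-- pmf of the sum of independent Bernoulli variables with parameters from `L`. -/
def bc : List ℝ → ℕ → ℝ
  | [], 0 => 1
  | [], _ + 1 => 0
  | p :: l, 0 => (1 - p) * bc l 0
  | p :: l, k + 1 => (1 - p) * bc l (k + 1) + p * bc l k

lemma bc_nonneg {L : List ℝ} (hL : ∀ x ∈ L, 0 ≤ x ∧ x ≤ 1) (k : ℕ) : 0 ≤ bc L k := by
  induction L generalizing k with
  | nil => cases k <;> simp [bc]
  | cons p l ih =>
    have hp := hL p (by simp)
    have hl : ∀ x ∈ l, 0 ≤ x ∧ x ≤ 1 := fun x hx => hL x (by simp [hx])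
    have h1p : (0:ℝ) ≤ 1 - p := by linarith [hp.2]
    cases k with
    | zero => exact mul_nonneg h1p (ih hl 0)
    | succ k =>
      show 0 ≤ (1 - p) * bc l (k + 1) + p * bc l k
      exact add_nonneg (mul_nonneg h1p (ih hl _)) (mul_nonneg hp.1 (ih hl _))

lemma bc_eq_zero {L : List ℝ} {k : ℕ} (hk : L.length < k) : bc L k = 0 := by
  induction L generalizing k with
  | nil => cases k with
    | zero => simp at hk
    | succ k => simp [bc]
  | cons p l ih =>
    cases k with
    | zero => simp at hk
    | succ k =>
      simp only [List.length_cons, Nat.succ_lt_succ_iff] at hk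
      show (1 - p) * bc l (k + 1) + p * bc l k = 0
      rw [ih (by omega), ih hk]
      ring

/-- truncated expectation against `bc L`. -/
noncomputable def Ebc (L : List ℝ) (h : ℕ → ℝ) : ℝ :=
  ∑ k ∈ Finset.range (L.length + 1), bc L k * h k

lemma Ebc_eq (L : List ℝ) (h : ℕ → ℝ) {N : ℕ} (hN : L.length + 1 ≤ N) :
    ∑ k ∈ Finset.range N, bc L k * h k = Ebc L h := by
  rw [Ebc, eq_comm]
  refine Finset.sum_subset (Finset.range_subset_range.2 hN) ?_
  intro k hk hk'
  simp only [Finset.mem_range, not_lt] at hk'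
  rw [bc_eq_zero (by omega), zero_mul]

lemma Ebc_cons (p : ℝ) (l : List ℝ) (h : ℕ → ℝ) :
    Ebc (p :: l) h = (1 - p) * Ebc l h + p * Ebc l (fun k => h (k + 1)) := by
  have h1 : Ebc (p :: l) h
      = ∑ k ∈ Finset.range (l.length + 1), bc (p::l) (k+1) * h (k+1) + bc (p::l) 0 * h 0 := by
    rw [Ebc, List.length_cons, Finset.sum_range_succ']
  have h2 : ∀ k, bc (p::l) (k+1) = (1-p) * bc l (k+1) + p * bc l k := fun k => rfl
  have h0 : bc (p::l) 0 = (1-p) * bc l 0 := rfl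
  have h3 : Ebc l h = ∑ k ∈ Finset.range (l.length+1), bc l (k+1) * h (k+1) + bc l 0 * h 0 := by
    rw [← Ebc_eq l h (N := l.length + 2) (by omega), Finset.sum_range_succ']
  rw [h1, h3, Ebc]
  simp only [h2, h0, add_mul]
  rw [Finset.sum_add_distrib, mul_add, Finset.mul_sum, Finset.mul_sum]
  simp only [← mul_assoc]
  ring

lemma Ebc_one {L : List ℝ} : Ebc L (fun _ => 1) = 1 := by
  induction L with
  | nil => simp [Ebc, bc]
  | cons p l ih => rw [Ebc_cons, ih]; norm_num [ih]

lemma Ebc_abs_le {L : List ℝ} (hL : ∀ x ∈ L, 0 ≤ x ∧ x ≤ 1) {h : ℕ → ℝ} {δ : ℝ}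
    (hh : ∀ k, |h k| ≤ δ) : |Ebc L h| ≤ δ := by
  have h1 : |Ebc L h| ≤ ∑ k ∈ Finset.range (L.length + 1), bc L k * δ := by
    refine (Finset.abs_sum_le_sum_abs _ _).trans (Finset.sum_le_sum fun k _ => ?_)
    rw [abs_mul, abs_of_nonneg (bc_nonneg hL k)]
    exact mul_le_mul_of_nonneg_left (hh k) (bc_nonneg hL k)
  calc |Ebc L h| ≤ ∑ k ∈ Finset.range (L.length + 1), bc L k * δ := h1
    _ = Ebc L (fun _ => 1) * δ := by rw [Ebc, Finset.sum_mul]; simp [mul_assoc, mul_comm]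
    _ = δ := by rw [Ebc_one, one_mul]




lemma bc_perm {L L' : List ℝ} (h : L.Perm L') : bc L = bc L' := by
  induction h with
  | nil => rfl
  | cons x _ ih =>
    funext k
    cases k with
    | zero => show (1-x) * bc _ 0 = (1-x) * bc _ 0; rw [ih]
    | succ k => show (1-x) * bc _ (k+1) + x * bc _ k = (1-x) * bc _ (k+1) + x * bc _ k
                rw [ih]
  | swap x y l =>
    funext k
    match k with
    | 0 => show (1-y)*((1-x)*bc l 0) = (1-x)*((1-y)*bc l 0); ring
    | 1 =>
      show (1-y)*((1-x)*bc l 1 + x*bc l 0) + y*((1-x)*bc l 0)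
        = (1-x)*((1-y)*bc l 1 + y*bc l 0) + x*((1-y)*bc l 0)
      ring
    | (k+2) =>
      show (1-y)*((1-x)*bc l (k+2) + x*bc l (k+1)) + y*((1-x)*bc l (k+1) + x*bc l k)
        = (1-x)*((1-y)*bc l (k+2) + y*bc l (k+1)) + x*((1-y)*bc l (k+1) + y*bc l k)
      ring
  | trans _ _ ih1 ih2 => rw [ih1, ih2]

lemma Ebc_add (L : List ℝ) (a b : ℕ → ℝ) :
    Ebc L (fun k => a k + b k) = Ebc L a + Ebc L b := by
  simp only [Ebc, mul_add, Finset.sum_add_distrib]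

lemma Ebc_smul (L : List ℝ) (c : ℝ) (a : ℕ → ℝ) :
    Ebc L (fun k => c * a k) = c * Ebc L a := by
  simp only [Ebc, Finset.mul_sum]; congr 1; funext k; ring

lemma Ebc_congr (L : List ℝ) {a b : ℕ → ℝ} (h : ∀ k, a k = b k) : Ebc L a = Ebc L b := by
  simp only [Ebc]; exact Finset.sum_congr rfl fun k _ => by rw [h]

lemma Ebc_sub (L : List ℝ) (a b : ℕ → ℝ) :
    Ebc L (fun k => a k - b k) = Ebc L a - Ebc L b := by
  simp only [Ebc, mul_sub, Finset.sum_sub_distrib]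

lemma stein_I {δ : ℝ} (hδ : 0 ≤ δ) (L : List ℝ) (hL : ∀ x ∈ L, 0 ≤ x ∧ x ≤ 1)
    (g : ℕ → ℝ) (hg : ∀ k, 1 ≤ k → |g (k+1) - g k| ≤ δ) :
    |Ebc L (fun k => L.sum * g (k+1) - (k : ℝ) * g k)| ≤ δ * (L.map (fun x => x^2)).sum := by
  induction L generalizing g with
  | nil => simp [Ebc, bc]
  | cons p l ih =>
    have hp := hL p (by simp)
    have hl : ∀ x ∈ l, 0 ≤ x ∧ x ≤ 1 := fun x hx => hL x (by simp [hx])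
    have h1p : (0:ℝ) ≤ 1 - p := by linarith [hp.2]
    set s := l.sum with hs
    have hsum : (p :: l).sum = p + s := by simp [hs]
    -- decompose
    have e1 : Ebc (p :: l) (fun k => (p :: l).sum * g (k+1) - (k:ℝ) * g k)
        = (1 - p) * Ebc l (fun k => (p+s) * g (k+1) - (k:ℝ) * g k)
          + p * Ebc l (fun k => (p+s) * g (k+2) - ((k:ℝ)+1) * g (k+1)) := by
      rw [Ebc_cons, hsum]
      congr 1
      exact congrArg (p * ·) (Ebc_congr l fun k => by push_cast; ring)
    have e2 : Ebc l (fun k => (p+s) * g (k+1) - (k:ℝ) * g k)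
        = Ebc l (fun k => s * g (k+1) - (k:ℝ) * g k) + p * Ebc l (fun k => g (k+1)) := by
      rw [← Ebc_smul, ← Ebc_add]
      congr 1; funext k; ring
    have e3 : Ebc l (fun k => (p+s) * g (k+2) - ((k:ℝ)+1) * g (k+1))
        = Ebc l (fun k => s * (g ∘ Nat.succ) (k+1) - (k:ℝ) * (g ∘ Nat.succ) k)
          + p * Ebc l (fun k => g (k+2)) - Ebc l (fun k => g (k+1)) := by
      rw [← Ebc_smul, ← Ebc_add, ← Ebc_sub]
      congr 1; funext k; simp only [Function.comp]; ring
    have key : Ebc (p :: l) (fun k => (p :: l).sum * g (k+1) - (k:ℝ) * g k)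
        = (1 - p) * Ebc l (fun k => s * g (k+1) - (k:ℝ) * g k)
          + p * Ebc l (fun k => s * (g ∘ Nat.succ) (k+1) - (k:ℝ) * (g ∘ Nat.succ) k)
          + p^2 * Ebc l (fun k => g (k+2) - g (k+1)) := by
      rw [e1, e2, e3,
        show Ebc l (fun k => g (k+2) - g (k+1))
          = Ebc l (fun k => g (k+2)) - Ebc l (fun k => g (k+1)) from Ebc_sub l _ _]
      ring
    have b1 : |Ebc l (fun k => s * g (k+1) - (k:ℝ) * g k)| ≤ δ * (l.map (fun x => x^2)).sum :=
      ih hl g hg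
    have b2 : |Ebc l (fun k => s * (g ∘ Nat.succ) (k+1) - (k:ℝ) * (g ∘ Nat.succ) k)|
        ≤ δ * (l.map (fun x => x^2)).sum := by
      refine ih hl (g ∘ Nat.succ) (fun k hk => ?_)
      simpa [Function.comp, Nat.succ_eq_add_one] using hg (k+1) (by omega)
    have b3 : |Ebc l (fun k => g (k+2) - g (k+1))| ≤ δ :=
      Ebc_abs_le hl (fun k => hg (k+1) (by omega))
    rw [key]
    have habs : |(1 - p) * Ebc l (fun k => s * g (k+1) - (k:ℝ) * g k)
          + p * Ebc l (fun k => s * (g ∘ Nat.succ) (k+1) - (k:ℝ) * (g ∘ Nat.succ) k)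
          + p^2 * Ebc l (fun k => g (k+2) - g (k+1))|
        ≤ (1-p) * (δ * (l.map (fun x => x^2)).sum)
          + p * (δ * (l.map (fun x => x^2)).sum) + p^2 * δ := by
      refine (abs_add_le _ _).trans (add_le_add ((abs_add_le _ _).trans (add_le_add ?_ ?_)) ?_)
      · rw [abs_mul, abs_of_nonneg h1p]
        exact mul_le_mul_of_nonneg_left b1 h1p
      · rw [abs_mul, abs_of_nonneg hp.1]
        exact mul_le_mul_of_nonneg_left b2 hp.1
      · rw [abs_mul, abs_of_nonneg (by positivity : (0:ℝ) ≤ p^2)]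
        exact mul_le_mul_of_nonneg_left b3 (by positivity)
    refine habs.trans ?_
    have : ((p :: l).map (fun x => x^2)).sum = p^2 + (l.map (fun x => x^2)).sum := by simp
    rw [this]
    nlinarith [hδ, hp.1, hp.2, List.sum_nonneg (l := l.map (fun x => x^2))
      (fun x hx => by obtain ⟨y, _, rfl⟩ := List.mem_map.1 hx; positivity)]


/-! ### The Stein solution for the Poisson distribution -/

noncomputable def po (lam : ℝ) (m : ℕ) : ℝ := Real.exp (-lam) * lam ^ m / m.factorial

noncomputable def U (lam : ℝ) (j : ℕ) : ℝ := ∑ i ∈ Finset.range (j + 1), lam ^ i / i.factorial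

noncomputable def V (lam : ℝ) (j : ℕ) : ℝ := ∑' i : ℕ, lam ^ (i + (j + 1)) / (i + (j + 1)).factorial

noncomputable def gm (lam : ℝ) : ℕ → ℕ → ℝ
  | _, 0 => 0
  | m, j + 1 => ((j.factorial : ℝ) / lam ^ (j + 1)) * (lam ^ m / m.factorial) *
      ((if m ≤ j then (1 : ℝ) else 0) - Real.exp (-lam) * U lam j)

variable {lam : ℝ}

lemma summable_pdf (lam : ℝ) : Summable (fun i : ℕ => lam ^ i / i.factorial) :=
  Real.summable_pow_div_factorial lam

lemma exp_eq_tsum (lam : ℝ) : Real.exp lam = ∑' i : ℕ, lam ^ i / i.factorial := by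
  rw [Real.exp_eq_exp_ℝ, NormedSpace.exp_eq_tsum_div]

lemma summable_V (lam : ℝ) (j : ℕ) :
    Summable (fun i : ℕ => lam ^ (i + (j + 1)) / (i + (j + 1)).factorial) :=
  (summable_nat_add_iff (f := fun i : ℕ => lam ^ i / (i.factorial : ℝ)) (j + 1)).2
    (summable_pdf lam)

lemma U_add_V (lam : ℝ) (j : ℕ) : U lam j + V lam j = Real.exp lam := by
  rw [U, V, exp_eq_tsum lam]
  exact Summable.sum_add_tsum_nat_add (j + 1) (summable_pdf lam)

lemma V_nonneg (hlam : 0 ≤ lam) (j : ℕ) : 0 ≤ V lam j :=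
  tsum_nonneg fun i => by positivity

lemma U_pos (hlam : 0 < lam) (j : ℕ) : 0 < U lam j := by
  rw [U]
  refine Finset.sum_pos (fun i _ => by positivity) ⟨0, by simp⟩

lemma EU_le_one (hlam : 0 < lam) (j : ℕ) : Real.exp (-lam) * U lam j ≤ 1 := by
  have h1 : U lam j ≤ Real.exp lam := by
    have := V_nonneg hlam.le j; linarith [U_add_V lam j]
  calc Real.exp (-lam) * U lam j ≤ Real.exp (-lam) * Real.exp lam :=
        mul_le_mul_of_nonneg_left h1 (Real.exp_pos _).le
    _ = 1 := by rw [← Real.exp_add]; norm_num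

/-- the key elementary inequality `lam * U(j) ≤ (j+1) * (U(j+1) - 1)`. -/
lemma claimU (hlam : 0 < lam) (j : ℕ) :
    lam * U lam j ≤ (j + 1 : ℝ) * (U lam (j + 1) - 1) := by
  have h1 : U lam (j + 1) - 1 = ∑ i ∈ Finset.range (j + 1), lam ^ (i + 1) / (i + 1).factorial := by
    rw [U, Finset.sum_range_succ']
    simp
  have h2 : lam * U lam j = ∑ i ∈ Finset.range (j + 1), lam ^ (i + 1) / i.factorial := by
    rw [U, Finset.mul_sum]
    exact Finset.sum_congr rfl fun i _ => by rw [pow_succ]; ring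
  rw [h1, h2, Finset.mul_sum]
  refine Finset.sum_le_sum fun i hi => ?_
  rw [Finset.mem_range] at hi
  have hfac : (0:ℝ) < i.factorial := by positivity
  have h3 : (i:ℝ) + 1 ≤ (j:ℝ) + 1 := by exact_mod_cast (by omega : i + 1 ≤ j + 1)
  have hpow : (0:ℝ) ≤ lam ^ (i+1) := by positivity
  have hfs' : (((i+1).factorial : ℕ) : ℝ) = ((i:ℝ) + 1) * i.factorial := by
    rw [Nat.factorial_succ]; push_cast; ring
  rw [hfs', show ((j:ℝ)+1) * (lam^(i+1)/(((i:ℝ)+1)*(i.factorial:ℝ)))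
      = (((j:ℝ)+1)*lam^(i+1))/(((i:ℝ)+1)*(i.factorial:ℝ)) by ring,
    div_le_div_iff₀ hfac (by positivity)]
  nlinarith [mul_nonneg (mul_nonneg (sub_nonneg.2 h3) hpow) hfac.le]

/-- Stein equation for `gm`. -/
lemma gm_stein (hlam : 0 < lam) (m j : ℕ) :
    lam * gm lam m (j + 1) - j * gm lam m j = (if j = m then 1 else 0) - po lam m := by
  have hl : lam ≠ 0 := hlam.ne'
  have hmf : ((m.factorial : ℝ)) ≠ 0 := by positivity
  cases j with
  | zero =>
    have hU0 : U lam 0 = 1 := by simp [U]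
    cases m with
    | zero => simp [gm, hU0, po, hl]
    | succ m =>
      simp only [gm, hU0, po, Nat.cast_zero, zero_mul, sub_zero]
      rw [if_neg (by omega), if_neg (by omega)]
      field_simp
      ring
  | succ j =>
    have hjf : ((j.factorial : ℝ)) ≠ 0 := by positivity
    have hU : U lam (j + 1) = U lam j + lam ^ (j + 1) / (j + 1).factorial := by
      rw [U, Finset.sum_range_succ]; rfl
    have hfs : ((j+1).factorial : ℝ) = ((j:ℝ) + 1) * j.factorial := by
      rw [Nat.factorial_succ]; push_cast; ring
    simp only [gm, hU, hfs, po]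
    rcases lt_trichotomy m (j + 1) with hm | hm | hm
    · rw [if_pos (by omega), if_pos (by omega), if_neg (by omega)]
      have hE := Real.exp_pos (-lam)
      field_simp
      push_cast; ring
    · subst hm
      rw [if_pos (by omega), if_neg (by omega), if_pos (by omega)]
      simp only [hfs]
      field_simp
      push_cast; ring
    · rw [if_neg (by omega), if_neg (by omega), if_neg (by omega)]
      field_simp
      push_cast; ring




lemma one_sub_EU (hlam : 0 < lam) (i : ℕ) :
    1 - Real.exp (-lam) * U lam i = Real.exp (-lam) * V lam i := by
  have h1 : Real.exp (-lam) * Real.exp lam = 1 := by rw [← Real.exp_add]; norm_num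
  have h2 : Real.exp (-lam) * (U lam i + V lam i) = Real.exp (-lam) * Real.exp lam := by
    rw [U_add_V lam i]
  rw [mul_add] at h2
  linarith

lemma gm_eq_succ_succ (hlam : 0 < lam) (m j : ℕ) :
    gm lam m (j + 2) = (lam ^ m / m.factorial) * ((j.factorial : ℝ) / lam ^ (j + 2)) *
      (((j:ℝ) + 1) * ((if m ≤ j + 1 then (1:ℝ) else 0) - Real.exp (-lam) * U lam (j + 1))) := by
  show (((j+1).factorial : ℝ) / lam ^ (j + 2)) * (lam ^ m / m.factorial) * _ = _
  have hfs : (((j+1).factorial : ℕ) : ℝ) = ((j:ℝ) + 1) * j.factorial := by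
    rw [Nat.factorial_succ]; push_cast; ring
  rw [hfs]; ring

lemma gm_eq_succ (hlam : 0 < lam) (m j : ℕ) :
    gm lam m (j + 1) = (lam ^ m / m.factorial) * ((j.factorial : ℝ) / lam ^ (j + 2)) *
      (lam * ((if m ≤ j then (1:ℝ) else 0) - Real.exp (-lam) * U lam j)) := by
  show (((j).factorial : ℝ) / lam ^ (j + 1)) * (lam ^ m / m.factorial) * _ = _
  rw [pow_succ]
  have hl : lam ≠ 0 := hlam.ne'
  field_simp
  ring

lemma V_step (hlam : 0 < lam) (j : ℕ) :
    ((j:ℝ) + 1) * V lam (j + 1) ≤ lam * V lam j := by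
  rw [V, V, ← tsum_mul_left, ← tsum_mul_left]
  refine Summable.tsum_le_tsum (fun i => ?_) ((summable_V lam (j+1)).mul_left _)
    ((summable_V lam j).mul_left _)
  have h1 : i + (j + 1 + 1) = (i + (j + 1)) + 1 := by omega
  rw [h1]
  set n := i + (j + 1) with hn
  have hfs : (((n+1).factorial : ℕ) : ℝ) = ((n:ℝ) + 1) * n.factorial := by
    rw [Nat.factorial_succ]; push_cast; ring
  have hfac : (0:ℝ) < n.factorial := by positivity
  have hj : (j:ℝ) + 1 ≤ (n:ℝ) + 1 := by
    have : j + 1 ≤ n + 1 := by omega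
    exact_mod_cast this
  have hpow : (0:ℝ) ≤ lam ^ (n+1) := by positivity
  rw [hfs, pow_succ]
  rw [show ((j:ℝ)+1) * (lam ^ n * lam / (((n:ℝ)+1) * n.factorial))
      = (((j:ℝ)+1) * (lam ^ n * lam)) / (((n:ℝ)+1) * n.factorial) by ring,
    show lam * (lam ^ n / (n.factorial:ℝ)) = (lam * lam ^ n) / (n.factorial:ℝ) by ring,
    div_le_div_iff₀ (by positivity) hfac]
  have h0 : (0:ℝ) ≤ lam ^ n * lam := by positivity
  nlinarith [mul_nonneg (mul_nonneg (sub_nonneg.2 hj) h0) hfac.le]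

lemma gm_anti (hlam : 0 < lam) {m j : ℕ} (hj : 1 ≤ j) (hne : m ≠ j) :
    gm lam m (j + 1) ≤ gm lam m j := by
  obtain ⟨j', rfl⟩ : ∃ j', j = j' + 1 := ⟨j - 1, by omega⟩
  rw [gm_eq_succ_succ hlam, gm_eq_succ hlam]
  have hc : (0:ℝ) ≤ (lam ^ m / m.factorial) * ((j'.factorial : ℝ) / lam ^ (j' + 2)) := by
    positivity
  refine mul_le_mul_of_nonneg_left ?_ hc
  have hE : (0:ℝ) < Real.exp (-lam) := Real.exp_pos _
  by_cases h1 : m ≤ j'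
  · rw [if_pos (by omega), if_pos h1]
    rw [one_sub_EU hlam, one_sub_EU hlam]
    have := V_step hlam j'
    nlinarith [this, hE.le]
  · rw [if_neg (by omega), if_neg h1]
    have hU := claimU hlam j'
    have hUp := U_pos hlam (j' + 1)
    nlinarith [hU, hE.le, hUp]

lemma gm_jump_le (hlam : 0 < lam) {j : ℕ} (hj : 1 ≤ j) :
    gm lam j (j + 1) - gm lam j j ≤ (1 - Real.exp (-lam)) / lam := by
  obtain ⟨j', rfl⟩ : ∃ j', j = j' + 1 := ⟨j - 1, by omega⟩
  rw [gm_eq_succ_succ hlam, gm_eq_succ hlam, if_pos (le_refl _), if_neg (by omega)]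
  have hE : (0:ℝ) < Real.exp (-lam) := Real.exp_pos _
  have hc : (lam ^ (j'+1) / ((j'+1).factorial : ℝ)) * ((j'.factorial : ℝ) / lam ^ (j' + 2))
      = 1 / (lam * ((j':ℝ) + 1)) := by
    have hfs : (((j'+1).factorial : ℕ) : ℝ) = ((j':ℝ) + 1) * j'.factorial := by
      rw [Nat.factorial_succ]; push_cast; ring
    rw [hfs, pow_succ]
    have hjf : ((j'.factorial : ℕ) : ℝ) ≠ 0 := by positivity
    field_simp
    ring
  rw [hc]
  set E := Real.exp (-lam) with hEdef
  set U0 := U lam j' with hU0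
  set U1 := U lam (j' + 1) with hU1
  set J := ((j':ℝ) + 1) with hJdef
  have hJ : (0:ℝ) < J := by positivity
  have hd : (0:ℝ) < lam * J := by positivity
  have hU : lam * U0 ≤ J * (U1 - 1) := claimU hlam j'
  have key : E * (lam * U0) ≤ E * (J * (U1 - 1)) := mul_le_mul_of_nonneg_left hU hE.le
  have expand : 1/(lam*J) * (J*(1-E*U1)) - 1/(lam*J)*(lam*(0-E*U0))
      = (1-E)/lam - (E*(J*(U1-1)) - E*(lam*U0))/(lam*J) := by
    field_simp
    ring
  rw [expand]
  have h0 : 0 ≤ (E*(J*(U1-1)) - E*(lam*U0))/(lam*J) := div_nonneg (by linarith) hd.le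
  linarith

lemma gm_jump_nonneg (hlam : 0 < lam) {j : ℕ} (hj : 1 ≤ j) :
    0 ≤ gm lam j (j + 1) - gm lam j j := by
  obtain ⟨j', rfl⟩ : ∃ j', j = j' + 1 := ⟨j - 1, by omega⟩
  rw [gm_eq_succ_succ hlam, gm_eq_succ hlam, if_pos (le_refl _), if_neg (by omega)]
  have hE : (0:ℝ) < Real.exp (-lam) := Real.exp_pos _
  have h1 : Real.exp (-lam) * U lam (j'+1) ≤ 1 := EU_le_one hlam (j'+1)
  have h2 : (0:ℝ) < U lam j' := U_pos hlam j'
  have hc : (0:ℝ) ≤ (lam ^ (j'+1) / ((j'+1).factorial : ℝ)) * ((j'.factorial : ℝ) / lam ^ (j' + 2)) := by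
    positivity
  have hinner : (0:ℝ) ≤ (((j':ℝ) + 1) * (1 - Real.exp (-lam) * U lam (j'+1))
      + lam * (Real.exp (-lam) * U lam j')) :=
    add_nonneg (mul_nonneg (by positivity) (by linarith))
      (mul_nonneg hlam.le (mul_nonneg hE.le h2.le))
  nlinarith [mul_nonneg hc hinner]




lemma gm_decomp (hlam : 0 < lam) (j : ℕ) : (fun m => gm lam m (j+1)) =
    fun m => ((j.factorial : ℝ) / lam ^ (j+1)) * ((lam ^ m / m.factorial) * (if m ≤ j then (1:ℝ) else 0))
      - (((j.factorial : ℝ) / lam ^ (j+1)) * (Real.exp (-lam) * U lam j)) * (lam ^ m / m.factorial) := by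
  funext m
  show ((j.factorial : ℝ) / lam ^ (j+1)) * (lam ^ m / m.factorial) * _ = _
  ring

lemma summable_ind (lam : ℝ) (j : ℕ) :
    Summable (fun m : ℕ => (lam ^ m / m.factorial) * (if m ≤ j then (1:ℝ) else 0)) := by
  apply summable_of_ne_finset_zero (s := Finset.range (j+1))
  intro m hm
  rw [Finset.mem_range, not_lt] at hm
  rw [if_neg (by omega), mul_zero]

lemma summable_gm (hlam : 0 < lam) (j : ℕ) : Summable (fun m => gm lam m (j+1)) := by
  rw [gm_decomp hlam j]
  exact ((summable_ind lam j).mul_left _).sub ((summable_pdf lam).mul_left _)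

lemma tsum_gm (hlam : 0 < lam) (j : ℕ) : ∑' m, gm lam m (j+1) = 0 := by
  rw [gm_decomp hlam j]
  rw [Summable.tsum_sub ((summable_ind lam j).mul_left _) ((summable_pdf lam).mul_left _),
    tsum_mul_left, tsum_mul_left]
  have h1 : ∑' m : ℕ, (lam ^ m / m.factorial) * (if m ≤ j then (1:ℝ) else 0) = U lam j := by
    rw [tsum_eq_sum (s := Finset.range (j+1))]
    · rw [U]
      exact Finset.sum_congr rfl fun m hm => by
        rw [Finset.mem_range] at hm; rw [if_pos (by omega), mul_one]
    · intro m hm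
      rw [Finset.mem_range, not_lt] at hm
      rw [if_neg (by omega), mul_zero]
  have h2 : ∑' m : ℕ, lam ^ m / (m.factorial : ℝ) = Real.exp lam := (exp_eq_tsum lam).symm
  rw [h1, h2]
  have h3 : Real.exp (-lam) * Real.exp lam = 1 := by rw [← Real.exp_add]; norm_num
  linear_combination (-((j.factorial : ℝ) / lam ^ (j+1) * U lam j)) * h3

/-! ### the Stein solution for a set `A` -/

noncomputable def gA (lam : ℝ) (A : Finset ℕ) (j : ℕ) : ℝ := ∑ m ∈ A, gm lam m j

lemma gA_stein (hlam : 0 < lam) (A : Finset ℕ) (j : ℕ) :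
    lam * gA lam A (j+1) - j * gA lam A j
      = (if j ∈ A then (1:ℝ) else 0) - ∑ m ∈ A, po lam m := by
  rw [gA, gA, Finset.mul_sum, Finset.mul_sum, ← Finset.sum_sub_distrib,
    Finset.sum_congr rfl (fun m _ => gm_stein hlam m j), Finset.sum_sub_distrib,
    Finset.sum_ite_eq A j (fun _ => (1:ℝ))]

lemma delta_nonneg (hlam : 0 < lam) : 0 ≤ (1 - Real.exp (-lam)) / lam := by
  have : Real.exp (-lam) ≤ Real.exp 0 := Real.exp_le_exp.2 (by linarith)
  rw [Real.exp_zero] at this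
  exact div_nonneg (by linarith) hlam.le

lemma gA_diff_le (hlam : 0 < lam) (A : Finset ℕ) {j : ℕ} (hj : 1 ≤ j) :
    gA lam A (j+1) - gA lam A j ≤ (1 - Real.exp (-lam)) / lam := by
  classical
  rw [gA, gA, ← Finset.sum_sub_distrib,
    ← Finset.sum_filter_add_sum_filter_not A (· = j)]
  have h2 : ∑ m ∈ A.filter (¬ · = j), (gm lam m (j+1) - gm lam m j) ≤ 0 :=
    Finset.sum_nonpos fun m hm => sub_nonpos.2
      (gm_anti hlam hj (by simpa using (Finset.mem_filter.1 hm).2))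
  have h1 : ∑ m ∈ A.filter (· = j), (gm lam m (j+1) - gm lam m j)
      ≤ (1 - Real.exp (-lam)) / lam := by
    rw [Finset.filter_eq' A j]
    split_ifs
    · rw [Finset.sum_singleton]; exact gm_jump_le hlam hj
    · rw [Finset.sum_empty]; exact delta_nonneg hlam
  linarith

lemma gA_diff_ge (hlam : 0 < lam) (A : Finset ℕ) {j : ℕ} (hj : 1 ≤ j) :
    -((1 - Real.exp (-lam)) / lam) ≤ gA lam A (j+1) - gA lam A j := by
  classical
  obtain ⟨j', rfl⟩ : ∃ j', j = j' + 1 := ⟨j - 1, by omega⟩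
  set Δ : ℕ → ℝ := fun m => gm lam m (j'+1+1) - gm lam m (j'+1) with hΔ
  have hsum : Summable Δ := (summable_gm hlam (j'+1)).sub (summable_gm hlam j')
  have htsum : ∑' m, Δ m = 0 := by
    rw [hΔ, Summable.tsum_sub (summable_gm hlam (j'+1)) (summable_gm hlam j'),
      tsum_gm hlam (j'+1), tsum_gm hlam j', sub_zero]
  set f : ℕ → ℝ := fun m => if m = j'+1 then 0 else Δ m with hf
  have hfsum : Summable f := by
    have : f = fun m => Δ m - (if m = j'+1 then Δ m else 0) := by
      funext m
      by_cases h : m = j'+1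
      · simp [hf, h]
      · simp [hf, h]
    rw [this]
    refine hsum.sub (summable_of_ne_finset_zero (s := {j'+1}) fun m hm => ?_)
    rw [if_neg (by simpa using hm)]
  have hft : ∑' m, f m = -Δ (j'+1) := by
    have := Summable.tsum_eq_add_tsum_ite hsum (j'+1)
    rw [htsum] at this
    rw [hf]
    linarith [this]
  have hfnonpos : ∀ m, f m ≤ 0 := by
    intro m
    by_cases h : m = j'+1
    · simp [hf, h]
    · have : f m = Δ m := by simp [hf, h]
      rw [this]
      exact sub_nonpos.2 (gm_anti hlam (by omega) h)
  -- sum over A of Δ ≥ sum over A.filter (≠ j) of Δ = sum of f ≥ tsum f = -Δ j ≥ -δ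
  rw [gA, gA, ← Finset.sum_sub_distrib,
    ← Finset.sum_filter_add_sum_filter_not A (· = j'+1)]
  have h1 : 0 ≤ ∑ m ∈ A.filter (· = j'+1), Δ m := by
    rw [Finset.filter_eq' A (j'+1)]
    split_ifs
    · rw [Finset.sum_singleton]; exact gm_jump_nonneg hlam (by omega)
    · rw [Finset.sum_empty]
  have h2 : ∑ m ∈ A.filter (¬ · = j'+1), Δ m = ∑ m ∈ A.filter (¬ · = j'+1), f m :=
    Finset.sum_congr rfl fun m hm => by
      have h := (Finset.mem_filter.1 hm).2
      simp only [hf]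
      rw [if_neg (by simpa using h)]
  have h3 : ∑' m, f m ≤ ∑ m ∈ A.filter (¬ · = j'+1), f m := by
    have hneg : ∀ m ∉ A.filter (¬ · = j'+1), 0 ≤ -f m := fun m _ => by
      linarith [hfnonpos m]
    have := Summable.sum_le_tsum (A.filter (¬ · = j'+1)) hneg hfsum.neg
    rw [tsum_neg] at this
    have h4 : ∑ m ∈ A.filter (¬ · = j'+1), -f m = -∑ m ∈ A.filter (¬ · = j'+1), f m := by
      rw [Finset.sum_neg_distrib]
    linarith [this, h4]
  have h5 : -((1 - Real.exp (-lam)) / lam) ≤ ∑' m, f m := by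
    rw [hft]
    have := gm_jump_le hlam (j := j'+1) (by omega)
    linarith
  linarith [h1, h2, h3, h5]




lemma stein_bound (L : List ℝ) (hL : ∀ x ∈ L, 0 ≤ x ∧ x ≤ 1) (hs : 0 < L.sum)
    (A : Finset ℕ) :
    ∑ k ∈ A, (bc L k - po L.sum k)
      ≤ (1 - Real.exp (-L.sum)) / L.sum * (L.map (fun x => x ^ 2)).sum := by
  classical
  set lam := L.sum with hlam
  set g : ℕ → ℝ := fun j => gA lam A j with hg
  set N : ℕ := L.length + 1 + (A.sup id + 1) with hN
  have hAN : ∀ a ∈ A, a < N := fun a ha => by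
    have := Finset.le_sup (f := id) ha
    simp only [id] at this
    omega
  have e0 : ∑ k ∈ A, (bc L k - po lam k)
      = ∑ k ∈ Finset.range N, bc L k * ((if k ∈ A then (1:ℝ) else 0) - ∑ m ∈ A, po lam m) := by
    rw [Finset.sum_sub_distrib]
    have r1 : ∑ k ∈ Finset.range N, bc L k * ((if k ∈ A then (1:ℝ) else 0) - ∑ m ∈ A, po lam m)
        = ∑ k ∈ Finset.range N, (if k ∈ A then bc L k else 0)
          - (∑ k ∈ Finset.range N, bc L k) * (∑ m ∈ A, po lam m) := by
      rw [Finset.sum_mul, ← Finset.sum_sub_distrib]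
      refine Finset.sum_congr rfl fun k _ => ?_
      split_ifs <;> ring
    rw [r1]
    have r2 : ∑ k ∈ Finset.range N, (if k ∈ A then bc L k else 0) = ∑ k ∈ A, bc L k := by
      rw [Finset.sum_ite_mem]
      congr 1
      exact Finset.inter_eq_right.2 fun a ha => Finset.mem_range.2 (hAN a ha)
    have r3 : ∑ k ∈ Finset.range N, bc L k = 1 := by
      have := Ebc_eq L (fun _ => 1) (N := N) (by omega)
      simp only [mul_one] at this
      rw [this, Ebc_one]
    rw [r2, r3, one_mul]
  have e1 : ∀ k : ℕ, (if k ∈ A then (1:ℝ) else 0) - ∑ m ∈ A, po lam m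
      = lam * g (k+1) - k * g k := fun k => (gA_stein hs A k).symm
  rw [e0]
  have e2 : ∑ k ∈ Finset.range N, bc L k * ((if k ∈ A then (1:ℝ) else 0) - ∑ m ∈ A, po lam m)
      = Ebc L (fun k => lam * g (k+1) - (k:ℝ) * g k) := by
    rw [← Ebc_eq L _ (N := N) (by omega)]
    exact Finset.sum_congr rfl fun k _ => by rw [e1 k]
  rw [e2]
  have hδ : 0 ≤ (1 - Real.exp (-lam)) / lam := delta_nonneg hs
  have hgd : ∀ k, 1 ≤ k → |g (k+1) - g k| ≤ (1 - Real.exp (-lam)) / lam := fun k hk =>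
    abs_le.2 ⟨by linarith [gA_diff_ge hs A hk], gA_diff_le hs A hk⟩
  calc Ebc L (fun k => lam * g (k+1) - (k:ℝ) * g k)
      ≤ |Ebc L (fun k => lam * g (k+1) - (k:ℝ) * g k)| := le_abs_self _
    _ ≤ (1 - Real.exp (-lam)) / lam * (L.map (fun x => x ^ 2)).sum :=
        stein_I hδ L hL g hgd




open MeasureTheory ProbabilityTheory in
lemma law {Ω : Type} [MeasurableSpace Ω] (μ : Measure Ω) [IsProbabilityMeasure μ]
    (X : ℕ → Ω → ℕ) (hXm : ∀ q, Measurable (X q))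
    (hind : iIndepFun X μ)
    (hX01 : ∀ q ω, X q ω ≤ 1) (p : ℕ → ℝ) (T : Finset ℕ)
    (hp1 : ∀ q ∈ T, (μ (X q ⁻¹' {1})).toReal = p q) :
    ∀ s : Finset ℕ, s ⊆ T → ∀ k : ℕ,
      (μ {ω | ∑ q ∈ s, X q ω = k}).toReal = bc (s.toList.map p) k := by
  classical
  intro s
  induction s using Finset.induction_on with
  | empty =>
    intro _ k
    cases k with
    | zero => simp [bc]
    | succ k => simp [bc]
  | insert _ _ hnotmem =>
    rename_i a s ih
    intro hsub k
    have ha : a ∈ T := hsub (Finset.mem_insert_self a s)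
    have hs : s ⊆ T := fun x hx => hsub (Finset.mem_insert_of_mem hx)
    set S : Ω → ℕ := ∑ j ∈ s, X j with hSdef
    have hS : Measurable S := by
      rw [hSdef]
      have := Finset.measurable_sum s fun i (_ : i ∈ s) => hXm i
      convert this using 1
      funext ω
      rw [Finset.sum_apply]
    have hSapp : ∀ ω, S ω = ∑ q ∈ s, X q ω := fun ω => by
      rw [hSdef, Finset.sum_apply]
    have hIndep : IndepFun (X a) S μ :=
      (hind.indepFun_finset_sum_of_notMem hXm hnotmem).symm
    have key : ∀ (i k' : ℕ), μ (X a ⁻¹' {i} ∩ S ⁻¹' {k'})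
        = μ (X a ⁻¹' {i}) * μ (S ⁻¹' {k'}) := fun i k' =>
      hIndep.measure_inter_preimage_eq_mul {i} {k'}
        (measurableSet_singleton _) (measurableSet_singleton _)
    have ihS : ∀ k', (μ (S ⁻¹' {k'})).toReal = bc (s.toList.map p) k' := by
      intro k'
      have : S ⁻¹' {k'} = {ω | ∑ q ∈ s, X q ω = k'} := by
        ext ω; simp [hSapp ω]
      rw [this, ih hs k']
    have hp0a : (μ (X a ⁻¹' {0})).toReal = 1 - p a := by
      have hcompl : X a ⁻¹' {0} = (X a ⁻¹' {1})ᶜ := by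
        ext ω
        simp only [Set.mem_preimage, Set.mem_singleton_iff, Set.mem_compl_iff]
        have := hX01 a ω
        omega
      rw [hcompl, prob_compl_eq_one_sub (hXm a (measurableSet_singleton 1)),
        ENNReal.toReal_sub_of_le prob_le_one (by simp), ENNReal.toReal_one, hp1 a ha]
    have hperm : ((insert a s).toList.map p).Perm (p a :: s.toList.map p) :=
      (Finset.toList_insert hnotmem).map p
    rw [bc_perm hperm]
    have hsum : ∀ ω, ∑ q ∈ insert a s, X q ω = X a ω + S ω := fun ω => by
      rw [hSapp ω, Finset.sum_insert hnotmem]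
    cases k with
    | zero =>
      have hev : {ω | ∑ q ∈ insert a s, X q ω = 0} = X a ⁻¹' {0} ∩ S ⁻¹' {0} := by
        ext ω
        simp only [Set.mem_setOf_eq, Set.mem_inter_iff, Set.mem_preimage,
          Set.mem_singleton_iff, hsum ω]
        omega
      rw [hev, key 0 0, ENNReal.toReal_mul, hp0a, ihS 0]
      rfl
    | succ k =>
      have hev : {ω | ∑ q ∈ insert a s, X q ω = k + 1}
          = (X a ⁻¹' {0} ∩ S ⁻¹' {k+1}) ∪ (X a ⁻¹' {1} ∩ S ⁻¹' {k}) := by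
        ext ω
        simp only [Set.mem_setOf_eq, Set.mem_union, Set.mem_inter_iff, Set.mem_preimage,
          Set.mem_singleton_iff, hsum ω]
        have := hX01 a ω
        omega
      have hdisj : Disjoint (X a ⁻¹' {0} ∩ S ⁻¹' {k+1}) (X a ⁻¹' {1} ∩ S ⁻¹' {k}) := by
        rw [Set.disjoint_left]
        rintro ω ⟨h1, -⟩ ⟨h2, -⟩
        simp only [Set.mem_preimage, Set.mem_singleton_iff] at h1 h2
        omega
      have hm2 : MeasurableSet (X a ⁻¹' {1} ∩ S ⁻¹' {k}) :=
        (hXm a (measurableSet_singleton 1)).inter (hS (measurableSet_singleton k))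
      rw [hev, measure_union hdisj hm2,
        ENNReal.toReal_add (measure_ne_top μ _) (measure_ne_top μ _),
        key 0 (k+1), key 1 k, ENNReal.toReal_mul, ENNReal.toReal_mul,
        hp0a, hp1 a ha, ihS (k+1), ihS k]
      rfl


end Stmt15

open MeasureTheory ProbabilityTheory Finset Stmt15

/-- Poisson approximation of `R_T = #{q ∈ T : W_q ≥ 1}`: with
`H₁(T) = Σ_{q∈T} 1/(q-1)` and `H₂(T) = Σ_{q∈T} 1/q²`, the total variation
distance between `R_T` and `Poisson(H₁(T))` is `≪ H₂(T)/(1 + H₁(T))`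
with an absolute implied constant. -/
theorem stmt_15 :
    ∃ C : ℝ, 0 < C ∧
    ∀ (T : Finset ℕ), (∀ q ∈ T, Nat.Prime q ∧ 3 ≤ q) →
    ∀ (Ω : Type) (_ : MeasurableSpace Ω) (μ : Measure Ω),
      IsProbabilityMeasure μ →
    ∀ (W : ℕ → Ω → ℕ), (∀ q, Measurable (W q)) →
      iIndepFun W μ →
      (∀ q ∈ T, (μ ((W q) ⁻¹' {0})).toReal = 1 - 1 / ((q : ℝ) - 1)) →
      (∀ q ∈ T, ∀ v : ℕ, 1 ≤ v →
        (μ ((W q) ⁻¹' {v})).toReal = 1 / (q : ℝ) ^ v) →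
      (1 / 2) * (∑' k : ℕ,
          |(μ {ω | (T.filter (fun q => 1 ≤ W q ω)).card = k}).toReal
            - Real.exp (-(∑ q ∈ T, 1 / ((q : ℝ) - 1)))
                * (∑ q ∈ T, 1 / ((q : ℝ) - 1)) ^ k / (Nat.factorial k)|)
        ≤ C * (∑ q ∈ T, 1 / (q : ℝ) ^ 2)
            / (1 + ∑ q ∈ T, 1 / ((q : ℝ) - 1)) := by
  classical
  refine ⟨9/2, by norm_num, ?_⟩
  intro T hT Ω mΩ μ hμ W hWm hWind hW0 _hWv
  set p : ℕ → ℝ := fun q => 1 / ((q : ℝ) - 1) with hp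
  set X : ℕ → Ω → ℕ := fun q ω => if 1 ≤ W q ω then 1 else 0 with hX
  have hXm : ∀ q, Measurable (X q) := fun q =>
    (Measurable.of_discrete (f := fun n : ℕ => if 1 ≤ n then 1 else 0)).comp (hWm q)
  have hind : iIndepFun X μ :=
    hWind.comp (fun _ (n : ℕ) => if 1 ≤ n then 1 else 0) (fun _ => Measurable.of_discrete)
  have hX01 : ∀ q ω, X q ω ≤ 1 := fun q ω => by
    simp only [hX]; split_ifs <;> omega
  have hq3 : ∀ q ∈ T, (3:ℝ) ≤ (q:ℝ) := fun q hq => by exact_mod_cast (hT q hq).2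
  have hp1 : ∀ q ∈ T, (μ (X q ⁻¹' {1})).toReal = p q := by
    intro q hq
    have hco : X q ⁻¹' {1} = (W q ⁻¹' {0})ᶜ := by
      ext ω
      simp only [hX, Set.mem_preimage, Set.mem_singleton_iff, Set.mem_compl_iff]
      split_ifs with h <;> simp <;> omega
    rw [hco, prob_compl_eq_one_sub (hWm q (measurableSet_singleton 0)),
      ENNReal.toReal_sub_of_le prob_le_one (by simp), ENNReal.toReal_one, hW0 q hq]
    simp [hp]
  set L : List ℝ := T.toList.map p with hL
  have hLlaw : ∀ k, (μ {ω | (T.filter (fun q => 1 ≤ W q ω)).card = k}).toReal = bc L k := by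
    intro k
    have hset : {ω | (T.filter (fun q => 1 ≤ W q ω)).card = k}
        = {ω | ∑ q ∈ T, X q ω = k} := by
      ext ω
      simp only [Set.mem_setOf_eq, Finset.card_filter]
      exact Iff.rfl
    rw [hset, law μ X hXm hind hX01 p T hp1 T subset_rfl k]
  have hLsum : L.sum = ∑ q ∈ T, p q := Finset.sum_map_toList T p
  have hLsq : (L.map (fun x => x ^ 2)).sum = ∑ q ∈ T, (p q) ^ 2 := by
    rw [hL, List.map_map]
    exact Finset.sum_map_toList T _
  set lam := ∑ q ∈ T, 1 / ((q : ℝ) - 1) with hlam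
  have hlamL : L.sum = lam := hLsum
  have hterm : ∀ k, (μ {ω | (T.filter (fun q => 1 ≤ W q ω)).card = k}).toReal
      - Real.exp (-lam) * lam ^ k / (Nat.factorial k) = bc L k - po lam k := fun k => by
    rw [hLlaw k]; rfl
  rcases T.eq_empty_or_nonempty with rfl | ⟨q0, hq0⟩
  · -- empty case
    have hlam0 : lam = 0 := by simp [hlam]
    have hL0 : L = [] := by simp [hL]
    have hzero : ∀ k : ℕ, |(μ {ω | (Finset.filter (fun q => 1 ≤ W q ω) ∅).card = k}).toReal
        - Real.exp (-lam) * lam ^ k / (Nat.factorial k)| = 0 := by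
      intro k
      rw [hterm k, hL0, hlam0]
      cases k with
      | zero => simp [bc, po]
      | succ k => simp [bc, po]
    rw [tsum_congr hzero]
    simp
  · have hppos : ∀ q ∈ T, 0 < p q ∧ p q ≤ 1 := by
      intro q hq
      have h3 := hq3 q hq
      constructor
      · apply one_div_pos.2; linarith
      · rw [hp]; rw [div_le_one (by linarith)]; linarith
    have hLmem : ∀ x ∈ L, 0 ≤ x ∧ x ≤ 1 := by
      intro x hx
      rw [hL] at hx
      obtain ⟨q, hq, rfl⟩ := List.mem_map.1 hx
      rw [Finset.mem_toList] at hq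
      exact ⟨(hppos q hq).1.le, (hppos q hq).2⟩
    have hs : 0 < L.sum := by
      rw [hLsum]
      exact Finset.sum_pos (fun q hq => (hppos q hq).1) ⟨q0, hq0⟩
    have hlampos : 0 < lam := hlamL ▸ hs
    set d : ℕ → ℝ := fun k => bc L k - po lam k with hd
    set n1 : ℕ := L.length + 1 with hn1
    have hpo_eq : ∀ k, po lam k = Real.exp (-lam) * (lam ^ k / k.factorial) := fun k => by
      rw [po, mul_div_assoc]
    have hsum_po : Summable (po lam) :=
      (((summable_pdf lam).mul_left (Real.exp (-lam)))).congr fun k => (hpo_eq k).symm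
    have hsum_bc : Summable (bc L) := by
      apply summable_of_ne_finset_zero (s := Finset.range n1)
      intro k hk
      rw [Finset.mem_range, not_lt] at hk
      exact bc_eq_zero (by omega)
    have hsum_d : Summable d := hsum_bc.sub hsum_po
    have htsum_bc : ∑' k, bc L k = 1 := by
      rw [tsum_eq_sum (s := Finset.range n1) (fun k hk => by
        rw [Finset.mem_range, not_lt] at hk
        exact bc_eq_zero (by omega))]
      have h := Ebc_one (L := L)
      rw [Ebc] at h
      simpa using h
    have htsum_po : ∑' k, po lam k = 1 := by
      rw [tsum_congr hpo_eq, tsum_mul_left, ← exp_eq_tsum, ← Real.exp_add]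
      norm_num
    have htsum_d : ∑' k, d k = 0 := by
      rw [hd, Summable.tsum_sub hsum_bc hsum_po, htsum_bc, htsum_po, sub_self]
    set maxd : ℕ → ℝ := fun k => max (d k) 0 with hmaxd
    have hmaxd_eq : ∀ k, maxd k = (d k + |d k|) / 2 := by
      intro k
      rcases le_or_gt (d k) 0 with h | h
      · rw [hmaxd]; simp only [max_eq_right h, abs_of_nonpos h]; ring
      · rw [hmaxd]; simp only [max_eq_left h.le, abs_of_pos h]; ring
    have hsum_maxd : Summable maxd :=
      (((hsum_d.add hsum_d.abs)).div_const 2).congr fun k => (hmaxd_eq k).symm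
    have habs_eq : ∀ k, |d k| = 2 * maxd k - d k := fun k => by
      rw [hmaxd_eq k]; ring
    have htsum_abs : ∑' k, |d k| = 2 * ∑' k, maxd k := by
      rw [tsum_congr habs_eq, Summable.tsum_sub (hsum_maxd.mul_left 2) hsum_d, tsum_mul_left, htsum_d,
        sub_zero]
    have hpo_nonneg : ∀ k, 0 ≤ po lam k := fun k => by
      rw [po]
      positivity
    have hM : ∑' k, maxd k = ∑ k ∈ Finset.range n1, maxd k := by
      apply tsum_eq_sum
      intro k hk
      rw [Finset.mem_range, not_lt] at hk
      have hdk : d k ≤ 0 := by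
        rw [hd]
        simp only
        rw [bc_eq_zero (by omega)]
        linarith [hpo_nonneg k]
      rw [hmaxd]
      simp only [max_eq_right hdk]
    set A : Finset ℕ := (Finset.range n1).filter (fun k => 0 < d k) with hA
    have hMA : ∑ k ∈ Finset.range n1, maxd k = ∑ k ∈ A, d k := by
      rw [← Finset.sum_filter_add_sum_filter_not (Finset.range n1) (fun k => 0 < d k)
        (fun k => maxd k)]
      have h1 : ∑ k ∈ (Finset.range n1).filter (fun k => 0 < d k), maxd k
          = ∑ k ∈ A, d k :=
        Finset.sum_congr rfl fun k hk => by
          rw [hmaxd]; exact max_eq_left (Finset.mem_filter.1 hk).2.le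
      have h2 : ∑ k ∈ (Finset.range n1).filter (fun k => ¬ 0 < d k), maxd k = 0 :=
        Finset.sum_eq_zero fun k hk => by
          rw [hmaxd]
          exact max_eq_right (le_of_not_gt (Finset.mem_filter.1 hk).2)
      rw [h1, h2, add_zero]
    have hstein := stein_bound L hLmem hs A
    simp only [hlamL] at hstein
    rw [hLsq] at hstein
    -- bound the Stein factor
    have hδ2 : (1 - Real.exp (-lam)) / lam ≤ 2 / (1 + lam) := by
      have h1 : 1 - Real.exp (-lam) ≤ lam := by linarith [Real.add_one_le_exp (-lam)]
      have h2 : 1 - Real.exp (-lam) ≤ 1 := by linarith [(Real.exp_pos (-lam)).le]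
      rcases le_total lam 1 with h | h
      · have ha : (1 - Real.exp (-lam)) / lam ≤ 1 := (div_le_one hlampos).2 h1
        have hb : (1:ℝ) ≤ 2 / (1 + lam) := by
          rw [le_div_iff₀ (by linarith)]; linarith
        linarith
      · have ha : (1 - Real.exp (-lam)) / lam ≤ 1 / lam := by gcongr
        have hb : 1 / lam ≤ 2 / (1 + lam) := by
          rw [div_le_div_iff₀ hlampos (by linarith)]; linarith
        linarith
    have hS2 : ∑ q ∈ T, (p q) ^ 2 ≤ 9/4 * ∑ q ∈ T, 1 / (q:ℝ) ^ 2 := by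
      rw [Finset.mul_sum]
      refine Finset.sum_le_sum fun q hq => ?_
      have h3 := hq3 q hq
      rw [hp]
      simp only
      rw [div_pow, one_pow,
        show (9:ℝ)/4 * (1 / (q:ℝ)^2) = 9 / (4 * (q:ℝ)^2) by ring,
        div_le_div_iff₀ (by nlinarith) (by nlinarith)]
      nlinarith [sq_nonneg ((q:ℝ) - 3)]
    have hS2_nonneg : 0 ≤ ∑ q ∈ T, (p q) ^ 2 :=
      Finset.sum_nonneg fun q _ => sq_nonneg _
    have hH2_nonneg : 0 ≤ ∑ q ∈ T, 1 / (q:ℝ) ^ 2 :=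
      Finset.sum_nonneg fun q _ => by positivity
    have hδ_nonneg : 0 ≤ (1 - Real.exp (-lam)) / lam := delta_nonneg hlampos
    -- assemble
    have hLHS : (1/2 : ℝ) * ∑' k, |(μ {ω | (T.filter (fun q => 1 ≤ W q ω)).card = k}).toReal
        - Real.exp (-lam) * lam ^ k / (Nat.factorial k)| = ∑ k ∈ A, d k := by
      rw [tsum_congr (fun k => congrArg abs (hterm k)), htsum_abs, hM, hMA]
      ring
    rw [hLHS]
    calc ∑ k ∈ A, d k
        ≤ (1 - Real.exp (-lam)) / lam * ∑ q ∈ T, (p q) ^ 2 := hstein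
      _ ≤ (2 / (1 + lam)) * (9/4 * ∑ q ∈ T, 1 / (q:ℝ) ^ 2) := by
          apply mul_le_mul hδ2 hS2 hS2_nonneg
          positivity
      _ = 9/2 * (∑ q ∈ T, 1 / (q:ℝ) ^ 2) / (1 + lam) := by
          field_simp
          ring
end
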